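/- Let H be a complex Hilbert space and let t_1, …, t_n be bounded linear operators on H satisfying Σ_{i=1}^n t_i t_i* ≤ 1. Let d be the complex vector-space dimension of span_ℂ{t_1, …, t_n} in B(H). Then Σ_{i=1}^n t_i* t_i ≤ d·1. -/

import Mathlib

open Finset ContinuousLinearMap
open scoped ComplexInnerProductSpace

/-- If `t_1, …, t_n` are bounded operators on a complex Hilbert space `H` with
`∑ tᵢ tᵢ* ≤ 1`, and `d` is the complex dimension of `span {t_1, …, t_n}` in `B(H)`,
then `∑ tᵢ* tᵢ ≤ d • 1` (in the Loewner order). -/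
theorem sum_adjoint_mul_self_le_dim
    {H : Type*} [NormedAddCommGroup H] [InnerProductSpace ℂ H] [CompleteSpace H]
    (n : ℕ) (t : Fin n → H →L[ℂ] H)
    (hcontr : ∑ i, t i * star (t i) ≤ 1)
    (d : ℕ) (hd : d = Module.finrank ℂ (Submodule.span ℂ (Set.range t))) :
    ∑ i, star (t i) * t i ≤ (d : H →L[ℂ] H) := by
  -- First, from the contraction hypothesis: ∑ ‖(t i)† x‖² ≤ ‖x‖² for all x
  have hrow : ∀ x : H, ∑ i, ‖(adjoint (t i)) x‖ ^ 2 ≤ ‖x‖ ^ 2 := by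
    intro x
    have hpos := (ContinuousLinearMap.le_def _ _).mp hcontr
    have h0 := hpos.inner_nonneg_left x
    have hsum : ⟪(∑ i, t i * star (t i)) x, x⟫
        = (∑ i, (‖(adjoint (t i)) x‖ : ℂ) ^ 2) := by
      rw [ContinuousLinearMap.sum_apply, sum_inner]
      refine Finset.sum_congr rfl fun i _ => ?_
      rw [ContinuousLinearMap.mul_apply, star_eq_adjoint,
        ← ContinuousLinearMap.adjoint_inner_right (t i) _ x]
      simp [inner_self_eq_norm_sq_to_K]
    have h1 : RCLike.re (⟪((1 : H →L[ℂ] H) - ∑ i, t i * star (t i)) x, x⟫)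
        = ‖x‖ ^ 2 - ∑ i, ‖(adjoint (t i)) x‖ ^ 2 := by
      rw [ContinuousLinearMap.sub_apply, inner_sub_left, map_sub, hsum,
        ContinuousLinearMap.one_apply, inner_self_eq_norm_sq]
      congr 1
      rw [map_sum]
      refine Finset.sum_congr rfl fun i _ => ?_
      rw [← Complex.ofReal_pow, RCLike.re_to_complex, Complex.ofReal_re]
    have h0' := (Complex.le_def.mp h0).1
    rw [Complex.zero_re, ← RCLike.re_to_complex, h1] at h0'
    linarith
  -- Key pointwise estimate
  have key : ∀ ξ : H, ∑ i, ‖t i ξ‖ ^ 2 ≤ (d : ℝ) * ‖ξ‖ ^ 2 := by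
    intro ξ
    classical
    -- evaluation at ξ as a linear map
    let ev : (H →L[ℂ] H) →ₗ[ℂ] H :=
      { toFun := fun f => f ξ
        map_add' := fun f g => rfl
        map_smul' := fun c f => rfl }
    set V : Submodule ℂ (H →L[ℂ] H) := Submodule.span ℂ (Set.range t) with hV
    have hVfin : FiniteDimensional ℂ V :=
      FiniteDimensional.span_of_finite ℂ (Set.finite_range t)
    set W : Submodule ℂ H := V.map ev with hW
    have hWfin : FiniteDimensional ℂ W := Module.Finite.map V ev
    have hdW : Module.finrank ℂ W ≤ d := hd ▸ Submodule.finrank_map_le ev V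
    set d' := Module.finrank ℂ W with hd'
    let b : OrthonormalBasis (Fin d') ℂ W := stdOrthonormalBasis ℂ W
    have hmem : ∀ i, t i ξ ∈ W := fun i =>
      ⟨t i, Submodule.subset_span ⟨i, rfl⟩, rfl⟩
    let w : Fin n → W := fun i => ⟨t i ξ, hmem i⟩
    -- Parseval for each w i
    have parseval : ∀ i, ‖t i ξ‖ ^ 2 = ∑ k, ‖⟪(b k : H), t i ξ⟫‖ ^ 2 := by
      intro i
      have hnorm : ‖t i ξ‖ = ‖w i‖ := rfl
      rw [hnorm, ← b.repr.norm_map (w i), EuclideanSpace.norm_eq,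
        Real.sq_sqrt (by positivity)]
      refine Finset.sum_congr rfl fun k _ => ?_
      rw [b.repr_apply_apply]
      rfl
    calc ∑ i, ‖t i ξ‖ ^ 2
        = ∑ i, ∑ k, ‖⟪(b k : H), t i ξ⟫‖ ^ 2 :=
          Finset.sum_congr rfl fun i _ => parseval i
      _ = ∑ k, ∑ i, ‖⟪(adjoint (t i)) (b k : H), ξ⟫‖ ^ 2 := by
          rw [Finset.sum_comm]
          refine Finset.sum_congr rfl fun k _ => Finset.sum_congr rfl fun i _ => ?_
          rw [ContinuousLinearMap.adjoint_inner_left]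
      _ ≤ ∑ k : Fin d', ∑ i, ‖(adjoint (t i)) (b k : H)‖ ^ 2 * ‖ξ‖ ^ 2 := by
          refine Finset.sum_le_sum fun k _ => Finset.sum_le_sum fun i _ => ?_
          rw [← mul_pow]
          exact pow_le_pow_left₀ (norm_nonneg _) (norm_inner_le_norm _ _) 2
      _ ≤ ∑ k : Fin d', ‖(b k : H)‖ ^ 2 * ‖ξ‖ ^ 2 := by
          refine Finset.sum_le_sum fun k _ => ?_
          rw [← Finset.sum_mul]
          exact mul_le_mul_of_nonneg_right (hrow _) (by positivity)
      _ = ∑ k : Fin d', ‖ξ‖ ^ 2 := by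
          refine Finset.sum_congr rfl fun k _ => ?_
          have : ‖(b k : H)‖ = 1 := by
            rw [show ‖(b k : H)‖ = ‖b k‖ from rfl, b.orthonormal.1 k]
          rw [this, one_pow, one_mul]
      _ = (d' : ℝ) * ‖ξ‖ ^ 2 := by simp [Finset.sum_const, mul_comm]
      _ ≤ (d : ℝ) * ‖ξ‖ ^ 2 := by
          apply mul_le_mul_of_nonneg_right _ (by positivity)
          exact_mod_cast hdW
  -- Conclude positivity of d - ∑ tᵢ* tᵢ
  rw [ContinuousLinearMap.le_def, ContinuousLinearMap.isPositive_iff_complex]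
  intro ξ
  have hval : ⟪((d : H →L[ℂ] H) - ∑ i, star (t i) * t i) ξ, ξ⟫
      = (((d : ℝ) * ‖ξ‖ ^ 2 - ∑ i, ‖t i ξ‖ ^ 2 : ℝ) : ℂ) := by
    have hS : ⟪(∑ i, star (t i) * t i) ξ, ξ⟫ = (∑ i, (‖t i ξ‖ : ℂ) ^ 2) := by
      rw [ContinuousLinearMap.sum_apply, sum_inner]
      refine Finset.sum_congr rfl fun i _ => ?_
      rw [ContinuousLinearMap.mul_apply, star_eq_adjoint,
        ContinuousLinearMap.adjoint_inner_left]
      simp [inner_self_eq_norm_sq_to_K]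
    have hc : ⟪((d : H →L[ℂ] H)) ξ, ξ⟫ = (d : ℂ) * (‖ξ‖ : ℂ) ^ 2 := by
      have : ((d : H →L[ℂ] H)) ξ = (d : ℂ) • ξ := by
        simp [ContinuousLinearMap.smul_apply, Nat.cast_smul_eq_nsmul]
      rw [this, inner_smul_left]
      simp [inner_self_eq_norm_sq_to_K, Complex.conj_natCast]
    rw [ContinuousLinearMap.sub_apply, inner_sub_left, hS, hc]
    push_cast
    ring
  have hre : RCLike.re (⟪((d : H →L[ℂ] H) - ∑ i, star (t i) * t i) ξ, ξ⟫)
      = ((d : ℝ) * ‖ξ‖ ^ 2 - ∑ i, ‖t i ξ‖ ^ 2 : ℝ) := by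
    rw [hval, RCLike.re_to_complex, Complex.ofReal_re]
  constructor
  · rw [hre, hval]
  · rw [hre]
    linarith [key ξ]
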